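/- arXiv:1108.5500 — 2 statements merged into one kernel-verified Lean document; each statement's English description precedes it below -/
import Mathlib

section
/- Let σ: S^d → S^d be the reflection σ_u(x) = x − 2(u·x)u for a unit vector u with u·O ≠ 0, and let S denote the associated polarization. For all Borel sets A, B ⊆ S^d, m(SA ∩ SB) − m(A ∩ B) = ∫_{S^d} 1_{A∖B}(x) · 1_{B∖A}(σ_u(x)) dm(x); in particular m(SA ∩ SB) ≥ m(A ∩ B). -/
open MeasureTheory Filter Real
open scoped ENNReal symmDiff BigOperators

noncomputable section

/-- Euclidean space `ℝ^{d+1}`. -/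
abbrev Esp (d : ℕ) : Type := EuclideanSpace ℝ (Fin (d + 1))

/-- The unit sphere `𝕊^d ⊆ ℝ^{d+1}`, as a set. -/
def sph (d : ℕ) : Set (Esp d) := Metric.sphere 0 1

/-- The north pole `O`. -/
def npole (d : ℕ) : Esp d := EuclideanSpace.single 0 1

/-- Geodesic distance `δ(x,y) = arccos (x ⬝ y)` on the sphere. -/
def gdist {d : ℕ} (x y : Esp d) : ℝ := Real.arccos (inner ℝ x y : ℝ)

/-- The reflection `σ_u (x) = x - 2 (u ⬝ x) u`. -/
def reflect {d : ℕ} (u x : Esp d) : Esp d := x - (2 * (inner ℝ u x : ℝ)) • u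

/-- The polarization `S_u A` of a set `A` with respect to the reflection `σ_u`. -/
def polarize {d : ℕ} (u : Esp d) (A : Set (Esp d)) : Set (Esp d) :=
  {x | if gdist x (npole d) ≤ gdist (reflect u x) (npole d)
       then x ∈ A ∨ reflect u x ∈ A
       else x ∈ A ∧ reflect u x ∈ A}

/-- `μ` is the uniform (rotation-invariant) Borel probability measure on `𝕊^d`:
it is a probability measure carried by the sphere that is invariant under every
linear isometry of `ℝ^{d+1}`. -/
def IsUniformSphere (d : ℕ) (μ : Measure (Esp d)) : Prop :=
  μ Set.univ = 1 ∧ μ (sph d)ᶜ = 0 ∧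
    ∀ g : Esp d ≃ₗᵢ[ℝ] Esp d, μ.map ⇑g = μ

/-- The polar cap of geodesic radius `r` centered at the north pole. -/
def cap (d : ℕ) (r : ℝ) : Set (Esp d) := {x ∈ sph d | gdist x (npole d) ≤ r}

variable {d : ℕ}

lemma inner_reflect (u : Esp d) (hu : ‖u‖ = 1) (x : Esp d) :
    (inner ℝ u (reflect u x) : ℝ) = - (inner ℝ u x : ℝ) := by
  have huu : (inner ℝ u u : ℝ) = 1 := by
    rw [real_inner_self_eq_norm_sq, hu]; norm_num
  rw [reflect, inner_sub_right, real_inner_smul_right, huu]; ring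

lemma reflect_invol (u : Esp d) (hu : ‖u‖ = 1) (x : Esp d) :
    reflect u (reflect u x) = x := by
  rw [reflect, inner_reflect u hu x, reflect]
  module

lemma norm_reflect (u : Esp d) (hu : ‖u‖ = 1) (x : Esp d) :
    ‖reflect u x‖ = ‖x‖ := by
  have h : ‖reflect u x‖ ^ 2 = ‖x‖ ^ 2 := by
    have hxu : (inner ℝ x u : ℝ) = inner ℝ u x := real_inner_comm u x
    rw [reflect, norm_sub_sq_real, real_inner_smul_right, norm_smul, hxu,
      Real.norm_eq_abs, mul_pow, sq_abs, hu]
    ring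
  calc ‖reflect u x‖ = Real.sqrt (‖reflect u x‖ ^ 2) := (Real.sqrt_sq (norm_nonneg _)).symm
    _ = Real.sqrt (‖x‖ ^ 2) := by rw [h]
    _ = ‖x‖ := Real.sqrt_sq (norm_nonneg _)

def reflectLIE (u : Esp d) (hu : ‖u‖ = 1) : Esp d ≃ₗᵢ[ℝ] Esp d :=
{ toFun := reflect u
  invFun := reflect u
  left_inv := reflect_invol u hu
  right_inv := reflect_invol u hu
  map_add' := by
    intro x y
    simp only [reflect, inner_add_right]
    module
  map_smul' := by
    intro c x
    simp only [reflect, inner_smul_right, RingHom.id_apply]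
    module
  norm_map' := norm_reflect u hu }

lemma reflect_continuous (u : Esp d) : Continuous (reflect u) := by
  unfold reflect
  exact continuous_id.sub ((continuous_const.mul
    (Continuous.inner (𝕜 := ℝ) continuous_const continuous_id)).smul continuous_const)

lemma norm_npole : ‖npole d‖ = 1 := by
  simp [npole]

/-- If a sphere point has equal geodesic distance to the pole as its reflection,
it is fixed by the reflection. -/
lemma reflect_fixed (u : Esp d) (hu : ‖u‖ = 1) (huO : (inner ℝ u (npole d) : ℝ) ≠ 0)
    (x : Esp d) (hx : ‖x‖ = 1)
    (h1 : gdist x (npole d) ≤ gdist (reflect u x) (npole d))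
    (h2 : gdist (reflect u x) (npole d) ≤ gdist x (npole d)) :
    reflect u x = x := by
  have heq : gdist x (npole d) = gdist (reflect u x) (npole d) := le_antisymm h1 h2
  have hb1 : |(inner ℝ x (npole d) : ℝ)| ≤ 1 := by
    have := abs_real_inner_le_norm x (npole d)
    rwa [hx, norm_npole, one_mul] at this
  have hb2 : |(inner ℝ (reflect u x) (npole d) : ℝ)| ≤ 1 := by
    have := abs_real_inner_le_norm (reflect u x) (npole d)
    rwa [norm_reflect u hu, hx, norm_npole, one_mul] at this
  have hinner : (inner ℝ x (npole d) : ℝ) = inner ℝ (reflect u x) (npole d) := by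
    have := congrArg Real.cos heq
    rwa [gdist, gdist, Real.cos_arccos (neg_le_of_abs_le hb1) (le_of_abs_le hb1),
      Real.cos_arccos (neg_le_of_abs_le hb2) (le_of_abs_le hb2)] at this
  have hux : (inner ℝ u x : ℝ) = 0 := by
    rw [reflect, inner_sub_left, real_inner_smul_left] at hinner
    have h0 : 2 * (inner ℝ u x : ℝ) * inner ℝ u (npole d) = 0 := by linarith
    rcases mul_eq_zero.mp h0 with h | h
    · rcases mul_eq_zero.mp h with h | h
      · norm_num at h
      · exact h
    · exact absurd h huO
  rw [reflect, hux]
  simp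

lemma mem_polarize_pos {u : Esp d} {A : Set (Esp d)} {x : Esp d}
    (hc : gdist x (npole d) ≤ gdist (reflect u x) (npole d)) :
    x ∈ polarize u A ↔ (x ∈ A ∨ reflect u x ∈ A) := by
  simp [polarize, hc]

lemma mem_polarize_neg {u : Esp d} {A : Set (Esp d)} {x : Esp d}
    (hc : ¬ gdist x (npole d) ≤ gdist (reflect u x) (npole d)) :
    x ∈ polarize u A ↔ (x ∈ A ∧ reflect u x ∈ A) := by
  simp [polarize, hc]

lemma polarize_measurable (u : Esp d) {A : Set (Esp d)} (hA : MeasurableSet A) :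
    MeasurableSet (polarize u A) := by
  have hg : Measurable fun x : Esp d => gdist x (npole d) :=
    (Real.continuous_arccos.comp (Continuous.inner continuous_id continuous_const)).measurable
  have hr : Measurable (reflect u (d := d)) := (reflect_continuous u).measurable
  have hH : MeasurableSet {x : Esp d | gdist x (npole d) ≤ gdist (reflect u x) (npole d)} :=
    measurableSet_le hg (hg.comp hr)
  have : polarize u A =
      ({x : Esp d | gdist x (npole d) ≤ gdist (reflect u x) (npole d)} ∩ (A ∪ reflect u ⁻¹' A)) ∪
      ({x : Esp d | gdist x (npole d) ≤ gdist (reflect u x) (npole d)}ᶜ ∩ (A ∩ reflect u ⁻¹' A)) := by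
    ext x
    by_cases h : gdist x (npole d) ≤ gdist (reflect u x) (npole d)
    · simp [polarize, h]
    · simp [polarize, h]
  rw [this]
  exact (hH.inter (hA.union (hr hA))).union (hH.compl.inter (hA.inter (hr hA)))

section pointwise

/-- Key pointwise identity, assuming the polarization condition holds at `x`. -/
lemma pointwise_aux (u : Esp d) (hu : ‖u‖ = 1) (huO : (inner ℝ u (npole d) : ℝ) ≠ 0)
    (A B : Set (Esp d)) (x : Esp d) (hx : ‖x‖ = 1)
    (hc : gdist x (npole d) ≤ gdist (reflect u x) (npole d)) :
    (polarize u A ∩ polarize u B).indicator (fun _ => (1 : ℝ≥0∞)) x +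
      (polarize u A ∩ polarize u B).indicator (fun _ => (1 : ℝ≥0∞)) (reflect u x) =
    ((A ∩ B).indicator (fun _ => (1 : ℝ≥0∞)) x +
      (A ∩ B).indicator (fun _ => (1 : ℝ≥0∞)) (reflect u x)) +
    (((A \ B).indicator (fun _ => (1 : ℝ≥0∞)) x *
        (B \ A).indicator (fun _ => (1 : ℝ≥0∞)) (reflect u x)) +
      ((A \ B).indicator (fun _ => (1 : ℝ≥0∞)) (reflect u x) *
        (B \ A).indicator (fun _ => (1 : ℝ≥0∞)) (reflect u (reflect u x)))) := by
  have hinv : reflect u (reflect u x) = x := reflect_invol u hu x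
  by_cases hc' : gdist (reflect u x) (npole d) ≤ gdist x (npole d)
  · -- fixed point case
    have hfix : reflect u x = x := reflect_fixed u hu huO x hx hc hc'
    have hpolA : x ∈ polarize u A ↔ x ∈ A := by
      rw [mem_polarize_pos hc, hfix, or_self]
    have hpolB : x ∈ polarize u B ↔ x ∈ B := by
      rw [mem_polarize_pos hc, hfix, or_self]
    rw [hinv, hfix]
    by_cases hA : x ∈ A <;> by_cases hB : x ∈ B <;>
      simp [Set.indicator_apply, Set.mem_inter_iff, Set.mem_diff, hpolA, hpolB, hA, hB]
  · -- strict case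
    have hcσ : ¬ gdist (reflect u x) (npole d) ≤ gdist (reflect u (reflect u x)) (npole d) := by
      rwa [hinv]
    have hpA : x ∈ polarize u A ↔ (x ∈ A ∨ reflect u x ∈ A) := mem_polarize_pos hc
    have hpB : x ∈ polarize u B ↔ (x ∈ B ∨ reflect u x ∈ B) := mem_polarize_pos hc
    have hqA : reflect u x ∈ polarize u A ↔ (reflect u x ∈ A ∧ x ∈ A) := by
      rw [mem_polarize_neg hcσ, hinv]
    have hqB : reflect u x ∈ polarize u B ↔ (reflect u x ∈ B ∧ x ∈ B) := by
      rw [mem_polarize_neg hcσ, hinv]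
    rw [hinv]
    by_cases h1 : x ∈ A <;> by_cases h2 : x ∈ B <;>
      by_cases h3 : reflect u x ∈ A <;> by_cases h4 : reflect u x ∈ B <;>
      simp [Set.indicator_apply, Set.mem_inter_iff, Set.mem_diff,
        hpA, hpB, hqA, hqB, h1, h2, h3, h4]

lemma pointwise (u : Esp d) (hu : ‖u‖ = 1) (huO : (inner ℝ u (npole d) : ℝ) ≠ 0)
    (A B : Set (Esp d)) (x : Esp d) (hx : x ∈ sph d) :
    (polarize u A ∩ polarize u B).indicator (fun _ => (1 : ℝ≥0∞)) x +
      (polarize u A ∩ polarize u B).indicator (fun _ => (1 : ℝ≥0∞)) (reflect u x) =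
    ((A ∩ B).indicator (fun _ => (1 : ℝ≥0∞)) x +
      (A ∩ B).indicator (fun _ => (1 : ℝ≥0∞)) (reflect u x)) +
    (((A \ B).indicator (fun _ => (1 : ℝ≥0∞)) x *
        (B \ A).indicator (fun _ => (1 : ℝ≥0∞)) (reflect u x)) +
      ((A \ B).indicator (fun _ => (1 : ℝ≥0∞)) (reflect u x) *
        (B \ A).indicator (fun _ => (1 : ℝ≥0∞)) x)) := by
  have hx1 : ‖x‖ = 1 := by
    simpa [sph] using hx
  have hinv : reflect u (reflect u x) = x := reflect_invol u hu x
  rcases le_total (gdist x (npole d)) (gdist (reflect u x) (npole d)) with hc | hc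
  · have := pointwise_aux u hu huO A B x hx1 hc
    rwa [hinv] at this
  · have hc' : gdist (reflect u x) (npole d) ≤ gdist (reflect u (reflect u x)) (npole d) := by
      rwa [hinv]
    have hx1' : ‖reflect u x‖ = 1 := by rw [norm_reflect u hu, hx1]
    have := pointwise_aux u hu huO A B (reflect u x) hx1' hc'
    rw [hinv] at this
    rw [add_comm ((polarize u A ∩ polarize u B).indicator _ x),
      add_comm ((A ∩ B).indicator _ x),
      add_comm ((A \ B).indicator _ x * _)]
    exact this

end pointwise

/-- For a reflection `σ_u` whose hyperplane does not pass through the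
north pole, and Borel sets `A, B ⊆ 𝕊^d`,
`m(S_u A ∩ S_u B) - m(A ∩ B) = ∫ 1_{A∖B}(x) 1_{B∖A}(σ_u x) dm(x)`;
in particular `m(S_u A ∩ S_u B) ≥ m(A ∩ B)`. -/
theorem polarize_inter_eq {d : ℕ} (μ : Measure (Esp d)) (hμ : IsUniformSphere d μ)
    (u : Esp d) (hu : ‖u‖ = 1) (huO : (inner ℝ u (npole d) : ℝ) ≠ 0)
    (A B : Set (Esp d)) (hA : A ⊆ sph d) (hB : B ⊆ sph d)
    (hAm : MeasurableSet A) (hBm : MeasurableSet B) :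
    μ (polarize u A ∩ polarize u B) =
      μ (A ∩ B) + ∫⁻ x, (A \ B).indicator (fun _ => (1 : ℝ≥0∞)) x *
        (B \ A).indicator (fun _ => (1 : ℝ≥0∞)) (reflect u x) ∂μ ∧
    μ (A ∩ B) ≤ μ (polarize u A ∩ polarize u B) := by
  obtain ⟨hprob, hnull, hinv⟩ := hμ
  have hrm : Measurable (reflect u (d := d)) := (reflect_continuous u).measurable
  have hmap : μ.map (reflect u) = μ := by
    have : (reflect u (d := d)) = ⇑(reflectLIE u hu) := by funext x; rfl
    rw [this]; exact hinv _
  have hmp : MeasurePreserving (reflect u) μ μ := ⟨hrm, hmap⟩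
  set F := (polarize u A ∩ polarize u B).indicator (fun _ => (1 : ℝ≥0∞)) with hF
  set G := (A ∩ B).indicator (fun _ => (1 : ℝ≥0∞)) with hG
  set g := fun x => (A \ B).indicator (fun _ => (1 : ℝ≥0∞)) x *
      (B \ A).indicator (fun _ => (1 : ℝ≥0∞)) (reflect u x) with hg
  have hPm : MeasurableSet (polarize u A ∩ polarize u B) :=
    (polarize_measurable u hAm).inter (polarize_measurable u hBm)
  have hFmeas : Measurable F := measurable_const.indicator hPm
  have hGmeas : Measurable G := measurable_const.indicator (hAm.inter hBm)
  have hABm : Measurable ((A \ B).indicator (fun _ => (1 : ℝ≥0∞))) :=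
    measurable_const.indicator (hAm.diff hBm)
  have hBAm : Measurable ((B \ A).indicator (fun _ => (1 : ℝ≥0∞))) :=
    measurable_const.indicator (hBm.diff hAm)
  have hgmeas : Measurable g := hABm.mul (hBAm.comp hrm)
  have hae : ∀ᵐ x ∂μ, F x + F (reflect u x) = (G x + G (reflect u x)) +
      (g x + g (reflect u x)) := by
    have hsph : ∀ᵐ x ∂μ, x ∈ sph d := by
      rw [MeasureTheory.ae_iff]
      simpa [Set.compl_def] using hnull
    filter_upwards [hsph] with x hx
    have := pointwise u hu huO A B x hx
    simpa [hF, hG, hg, reflect_invol u hu x] using this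
  have hint : ∫⁻ x, (F x + F (reflect u x)) ∂μ =
      ∫⁻ x, ((G x + G (reflect u x)) + (g x + g (reflect u x))) ∂μ :=
    lintegral_congr_ae hae
  have hLHS : ∫⁻ x, (F x + F (reflect u x)) ∂μ = 2 * ∫⁻ x, F x ∂μ := by
    rw [lintegral_add_left hFmeas, hmp.lintegral_comp hFmeas, two_mul]
  have hRHS : ∫⁻ x, ((G x + G (reflect u x)) + (g x + g (reflect u x))) ∂μ =
      2 * ((∫⁻ x, G x ∂μ) + ∫⁻ x, g x ∂μ) := by
    have hGs : Measurable fun x => G (reflect u x) := hGmeas.comp hrm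
    have h1 : Measurable fun x => G x + G (reflect u x) := hGmeas.add hGs
    rw [lintegral_add_left h1,
      lintegral_add_left hGmeas, hmp.lintegral_comp hGmeas,
      lintegral_add_left hgmeas, hmp.lintegral_comp hgmeas]
    ring
  have hkey : ∫⁻ x, F x ∂μ = (∫⁻ x, G x ∂μ) + ∫⁻ x, g x ∂μ := by
    have h2 : (2 : ℝ≥0∞) * ∫⁻ x, F x ∂μ = 2 * ((∫⁻ x, G x ∂μ) + ∫⁻ x, g x ∂μ) := by
      rw [← hLHS, hint, hRHS]
    exact (ENNReal.mul_right_inj (by norm_num) (by norm_num)).mp h2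
  have hFμ : ∫⁻ x, F x ∂μ = μ (polarize u A ∩ polarize u B) := by
    rw [hF]; exact lintegral_indicator_one hPm
  have hGμ : ∫⁻ x, G x ∂μ = μ (A ∩ B) := by
    rw [hG]; exact lintegral_indicator_one (hAm.inter hBm)
  have hmain : μ (polarize u A ∩ polarize u B) = μ (A ∩ B) + ∫⁻ x, g x ∂μ := by
    rw [← hFμ, ← hGμ]; exact hkey
  exact ⟨hmain, by rw [hmain]; exact le_self_add⟩
end
end

section
/- Let d = 1, fix x ∈ S^1, and let U be uniformly distributed on S^1. Then σ_U(x) is uniformly distributed on S^1, and for every β ∈ [0,π], P(δ(τ_U(x),O) > β) = 1_{δ(x,O) > β} · (1 − β/π). -/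
open MeasureTheory Filter Real
open scoped ENNReal symmDiff BigOperators

noncomputable section

/-- Iterated polarization: `polarizeSeq us A n = S_{u_{n-1}} ∘ ⋯ ∘ S_{u_0} A`. -/
def polarizeSeq {d : ℕ} (us : ℕ → Esp d) (A : Set (Esp d)) : ℕ → Set (Esp d)
  | 0 => A
  | n + 1 => polarize (us n) (polarizeSeq us A n)

/-- The compression `τ_u` associated with the reflection `σ_u`. -/
def compress {d : ℕ} (u x : Esp d) : Esp d :=
  if gdist x (npole d) ≤ gdist (reflect u x) (npole d) then x else reflect u x

/-- Iterated compression: `compressSeq us x n = τ_{u_{n-1}} ∘ ⋯ ∘ τ_{u_0} x`. -/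
def compressSeq {d : ℕ} (us : ℕ → Esp d) (x : Esp d) : ℕ → Esp d
  | 0 => x
  | n + 1 => compress (us n) (compressSeq us x n)

/-! ### Auxiliary material for the circle case -/

instance : MeasurableSpace Circle := borel Circle
instance : BorelSpace Circle := ⟨rfl⟩
instance : Fact (0 < 2 * π) := ⟨by positivity⟩

lemma emb_cc : MeasurableEmbedding (fun c : Circle => (c:ℂ)) := by
  have h : Topology.IsClosedEmbedding (fun c : Circle => (c:ℂ)) :=
    Continuous.isClosedEmbedding (by continuity) Circle.coe_injective
  exact h.measurableEmbedding

lemma range_cc : Set.range (fun c : Circle => (c:ℂ)) = Metric.sphere 0 1 := by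
  ext z
  simp only [Set.mem_range, mem_sphere_zero_iff_norm]
  exact ⟨fun ⟨c, hc⟩ => hc ▸ mem_sphere_zero_iff_norm.1 c.2,
    fun hz => ⟨⟨z, mem_sphere_zero_iff_norm.2 hz⟩, rfl⟩⟩

lemma reflect_formula {a b : ℂ} (ha : ‖a‖ = 1) :
    b - (2 * (inner ℝ a b : ℝ)) • a = -(a * a * (starRingEnd ℂ) b) := by
  rw [Complex.real_smul]
  push_cast
  rw [Complex.inner]
  have ha' : a * (starRingEnd ℂ) a = 1 := by
    rw [Complex.mul_conj', ha]; norm_num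
  have h2 := Complex.add_conj (b * (starRingEnd ℂ) a)
  simp only [map_mul, Complex.conj_conj] at h2
  push_cast at h2
  linear_combination a * h2 + (-b) * ha'

/-- A uniform probability measure on the unit circle of `ℂ`. -/
def CircUnif (ν : Measure ℂ) : Prop :=
  ν Set.univ = 1 ∧ ν (Metric.sphere (0:ℂ) 1)ᶜ = 0 ∧
    ∀ c : Circle, ν.map (fun z => (c:ℂ) * z) = ν

lemma CircUnif.map_comap {ν : Measure ℂ} (h : CircUnif ν) :
    (ν.comap (fun c : Circle => (c:ℂ))).map (fun c : Circle => (c:ℂ)) = ν := by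
  rw [emb_cc.map_comap, range_cc, Measure.restrict_eq_self_of_ae_mem]
  rw [ae_iff]
  exact h.2.1

lemma CircUnif.isProb {ν : Measure ℂ} (h : CircUnif ν) :
    IsProbabilityMeasure (ν.comap (fun c : Circle => (c:ℂ))) := by
  constructor
  rw [emb_cc.comap_apply, Set.image_univ, range_cc]
  have h2 := measure_add_measure_compl (μ := ν) (s := Metric.sphere (0:ℂ) 1)
    Metric.isClosed_sphere.measurableSet
  rw [h.2.1, add_zero, h.1] at h2
  exact h2

lemma CircUnif.leftInvariant {ν : Measure ℂ} (h : CircUnif ν) :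
    (ν.comap (fun c : Circle => (c:ℂ))).IsMulLeftInvariant := by
  constructor
  intro c
  set ρ := ν.comap (fun c : Circle => (c:ℂ)) with hρ
  have hmeas : Measurable (fun z : Circle => c * z) :=
    (continuous_const.mul continuous_id).measurable
  have key : (ρ.map (fun z : Circle => c * z)).map (fun c : Circle => (c:ℂ)) = ν := by
    rw [Measure.map_map emb_cc.measurable hmeas]
    have : ((fun c : Circle => (c:ℂ)) ∘ (fun z : Circle => c * z))
        = (fun z : ℂ => (c:ℂ) * z) ∘ (fun c : Circle => (c:ℂ)) := by
      funext z; simp [Circle.coe_mul]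
    rw [this, ← Measure.map_map (measurable_const_mul ((c:ℂ))) emb_cc.measurable,
      h.map_comap, h.2.2]
  have := congrArg (Measure.comap (fun c : Circle => (c:ℂ))) key
  rwa [emb_cc.comap_map] at this

/-- Uniqueness of uniform probability measures on the circle. -/
lemma circUnif_unique {ν₁ ν₂ : Measure ℂ} (h₁ : CircUnif ν₁) (h₂ : CircUnif ν₂) : ν₁ = ν₂ := by
  set K : TopologicalSpace.PositiveCompacts Circle :=
    ⟨⟨Set.univ, isCompact_univ⟩, by simpa [interior_univ] using Set.univ_nonempty⟩ with hK
  have e1 : ν₁.comap (fun c : Circle => (c:ℂ)) = ν₂.comap (fun c : Circle => (c:ℂ)) := by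
    have p1 := h₁.isProb; have p2 := h₂.isProb
    have l1 := h₁.leftInvariant; have l2 := h₂.leftInvariant
    rw [Measure.haarMeasure_unique (ν₁.comap (fun c : Circle => (c:ℂ))) K,
        Measure.haarMeasure_unique (ν₂.comap (fun c : Circle => (c:ℂ))) K]
    have v1 : (ν₁.comap (fun c : Circle => (c:ℂ))) K = 1 := by
      simpa [hK] using p1.measure_univ
    have v2 : (ν₂.comap (fun c : Circle => (c:ℂ))) K = 1 := by
      simpa [hK] using p2.measure_univ
    rw [v1, v2]
  calc ν₁ = (ν₁.comap (fun c : Circle => (c:ℂ))).map (fun c : Circle => (c:ℂ)) :=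
        h₁.map_comap.symm
    _ = (ν₂.comap (fun c : Circle => (c:ℂ))).map (fun c : Circle => (c:ℂ)) := by rw [e1]
    _ = ν₂ := h₂.map_comap

/-- The explicit uniform measure on the unit circle of `ℂ`. -/
def nustd : Measure ℂ :=
  (ENNReal.ofReal (2 * π))⁻¹ •
    (volume : Measure (AddCircle (2 * π))).map
      (fun a => ((AddCircle.homeomorphCircle' a : Circle) : ℂ))

lemma h_cont :
    Continuous (fun a : AddCircle (2*π) => ((AddCircle.homeomorphCircle' a : Circle) : ℂ)) :=
  (continuous_induced_dom).comp AddCircle.homeomorphCircle'.continuous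

lemma nustd_apply {S : Set ℂ} (hS : MeasurableSet S) :
    nustd S = (ENNReal.ofReal (2 * π))⁻¹ *
      (volume : Measure ℝ) ({θ : ℝ | ((Circle.exp θ : Circle) : ℂ) ∈ S} ∩ Set.Ioc 0 (2*π)) := by
  rw [nustd, Measure.smul_apply, smul_eq_mul,
    Measure.map_apply h_cont.measurable hS,
    AddCircle.add_projection_respects_measure (2*π) 0 (h_cont.measurable hS)]
  have hpre : (QuotientAddGroup.mk ⁻¹'
      ((fun a : AddCircle (2*π) => ((AddCircle.homeomorphCircle' a : Circle) : ℂ)) ⁻¹' S))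
      = {θ : ℝ | ((Circle.exp θ : Circle) : ℂ) ∈ S} := by
    ext θ; exact Iff.rfl
  rw [hpre, zero_add]

lemma nustd_univ : nustd Set.univ = 1 := by
  rw [nustd_apply MeasurableSet.univ]
  have : {θ : ℝ | ((Circle.exp θ : Circle) : ℂ) ∈ Set.univ} ∩ Set.Ioc 0 (2*π)
      = Set.Ioc 0 (2*π) := by simp
  rw [this, Real.volume_Ioc, sub_zero,
    ENNReal.inv_mul_cancel (ne_of_gt (ENNReal.ofReal_pos.2 Real.two_pi_pos))
      ENNReal.ofReal_ne_top]

lemma nustd_sphere_compl : nustd (Metric.sphere (0:ℂ) 1)ᶜ = 0 := by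
  rw [nustd_apply Metric.isClosed_sphere.measurableSet.compl]
  have : {θ : ℝ | ((Circle.exp θ : Circle) : ℂ) ∈ (Metric.sphere (0:ℂ) 1)ᶜ} = ∅ := by
    ext θ
    simp only [Set.mem_setOf_eq, Set.mem_compl_iff, Set.mem_empty_iff_false, iff_false, not_not]
    exact (Circle.exp θ).2
  simp [this]

lemma nustd_rot (c : Circle) : nustd.map (fun z => (c:ℂ) * z) = nustd := by
  rw [nustd, Measure.map_smul,
    Measure.map_map (measurable_const_mul ((c:ℂ))) h_cont.measurable]
  have hfun : ((fun z : ℂ => (c:ℂ) * z) ∘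
        (fun a : AddCircle (2*π) => ((AddCircle.homeomorphCircle' a : Circle) : ℂ)))
      = (fun a : AddCircle (2*π) => ((AddCircle.homeomorphCircle' a : Circle) : ℂ)) ∘
        (fun a : AddCircle (2*π) => ((Complex.arg c : ℝ) : AddCircle (2*π)) + a) := by
    funext a
    induction a using QuotientAddGroup.induction_on with
    | H θ =>
      show (c:ℂ) * ((Circle.exp θ : Circle) : ℂ)
        = ((AddCircle.homeomorphCircle'
            (((Complex.arg c : ℝ) : AddCircle (2*π)) + (θ : AddCircle (2*π))) : Circle) : ℂ)
      have h1 : (((Complex.arg c : ℝ) : AddCircle (2*π)) + (θ : AddCircle (2*π)))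
          = ((Complex.arg c + θ : ℝ) : AddCircle (2*π)) := rfl
      rw [h1]
      show (c:ℂ) * ((Circle.exp θ : Circle) : ℂ) = ((Circle.exp (Complex.arg c + θ) : Circle) : ℂ)
      rw [Circle.exp_add, Circle.coe_mul, Circle.exp_arg]
  rw [hfun, ← Measure.map_map h_cont.measurable (measurable_const_add _),
    map_add_left_eq_self]

lemma nustd_circUnif : CircUnif nustd :=
  ⟨nustd_univ, nustd_sphere_compl, nustd_rot⟩

lemma nustd_arc {β : ℝ} (hβ0 : 0 ≤ β) (hβπ : β ≤ π) :
    nustd {z : ℂ | β < Real.arccos z.re}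
      = (ENNReal.ofReal (2*π))⁻¹ * ENNReal.ofReal (2*π - β - β) := by
  have hSm : MeasurableSet {z : ℂ | β < Real.arccos z.re} := by
    have : Continuous (fun z : ℂ => Real.arccos z.re) :=
      Real.continuous_arccos.comp Complex.continuous_re
    exact measurableSet_lt measurable_const this.measurable
  rw [nustd_apply hSm]
  have harc : ∀ θ : ℝ, 0 < θ → θ ≤ 2*π → Real.arccos (Real.cos θ)
      = if θ ≤ π then θ else 2*π - θ := by
    intro θ h1 h2
    split_ifs with h
    · exact Real.arccos_cos h1.le h
    · rw [← Real.cos_two_pi_sub, Real.arccos_cos (by linarith) (by linarith)]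
  have hset : {θ : ℝ | ((Circle.exp θ : Circle) : ℂ) ∈ {z : ℂ | β < Real.arccos z.re}}
      ∩ Set.Ioc 0 (2*π) = Set.Ioo β (2*π - β) := by
    ext θ
    simp only [Set.mem_inter_iff, Set.mem_setOf_eq, Set.mem_Ioc, Set.mem_Ioo,
      Circle.coe_exp, Complex.exp_ofReal_mul_I_re]
    constructor
    · rintro ⟨hb, h1, h2⟩
      rw [harc θ h1 h2] at hb
      split_ifs at hb with h
      · exact ⟨hb, by linarith⟩
      · exact ⟨by linarith [not_le.1 h], by linarith⟩
    · rintro ⟨hb, h2⟩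
      have h1 : 0 < θ := lt_of_le_of_lt hβ0 hb
      have h2' : θ ≤ 2*π := by linarith
      refine ⟨?_, h1, h2'⟩
      rw [harc θ h1 h2']
      split_ifs with h
      · exact hb
      · linarith
  rw [hset, Real.volume_Ioo]

lemma circUnif_sq {ν : Measure ℂ} (h : CircUnif ν) : CircUnif (ν.map (fun z => z * z)) := by
  have hm : Measurable (fun z : ℂ => z * z) := (continuous_id.mul continuous_id).measurable
  refine ⟨?_, ?_, ?_⟩
  · rw [Measure.map_apply hm MeasurableSet.univ, Set.preimage_univ, h.1]
  · rw [Measure.map_apply hm Metric.isClosed_sphere.measurableSet.compl]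
    refine measure_mono_null ?_ h.2.1
    intro z hz
    simp only [Set.mem_preimage, Set.mem_compl_iff, mem_sphere_zero_iff_norm] at *
    intro h1; apply hz; rw [norm_mul, h1, one_mul]
  · intro c
    obtain ⟨w, hw⟩ : ∃ w : Circle, w * w = c :=
      ⟨Circle.exp (Complex.arg c / 2), by rw [← Circle.exp_add, add_halves, Circle.exp_arg]⟩
    rw [Measure.map_map (measurable_const_mul _) hm]
    have hcomp : ((fun z : ℂ => (c:ℂ) * z) ∘ (fun z : ℂ => z * z))
        = (fun z : ℂ => z * z) ∘ (fun z : ℂ => (w:ℂ) * z) := by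
      funext z
      simp only [Function.comp_apply]
      rw [← hw, Circle.coe_mul]; ring
    rw [hcomp, ← Measure.map_map hm (measurable_const_mul _), h.2.2 w]

/-- For `d = 1`, `x ∈ 𝕊¹` fixed and `U` uniform on `𝕊¹`, the reflected
point `σ_U(x)` is uniformly distributed on `𝕊¹`, and
`P(δ(τ_U(x),O) > β) = 1_{δ(x,O) > β} (1 − β/π)` for every `β ∈ [0,π]`. -/
theorem circle_case (μ : Measure (Esp 1)) (hμ : IsUniformSphere 1 μ)
    (x : Esp 1) (hx : x ∈ sph 1) :
    μ.map (fun u => reflect u x) = μ ∧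
    ∀ β ∈ Set.Icc (0:ℝ) π,
      (μ {u | β < gdist (compress u x) (npole 1)}).toReal =
        if β < gdist x (npole 1) then 1 - β / π else 0 := by
  obtain ⟨hμ1, hμ0, hμinv⟩ := hμ
  set e : EuclideanSpace ℝ (Fin 2) ≃ₗᵢ[ℝ] ℂ := Complex.orthonormalBasisOneI.repr.symm with he
  have hEinv : ∀ g : ℂ ≃ₗᵢ[ℝ] ℂ, (μ.map ⇑e).map ⇑g = μ.map ⇑e := by
    intro g
    rw [Measure.map_map g.continuous.measurable e.continuous.measurable]
    have hc : (⇑g ∘ ⇑e) = ⇑e ∘ ⇑((e.trans g).trans e.symm) := by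
      funext u; simp
    rw [hc, ← Measure.map_map e.continuous.measurable
      (LinearIsometryEquiv.continuous _).measurable, hμinv _]
  have hν : CircUnif (μ.map ⇑e) := by
    refine ⟨?_, ?_, ?_⟩
    · rw [Measure.map_apply e.continuous.measurable MeasurableSet.univ, Set.preimage_univ, hμ1]
    · rw [Measure.map_apply e.continuous.measurable Metric.isClosed_sphere.measurableSet.compl]
      have hp : ⇑e ⁻¹' (Metric.sphere (0:ℂ) 1)ᶜ = (sph 1)ᶜ := by
        ext y
        simp [sph, mem_sphere_zero_iff_norm, e.norm_map]
      rw [hp]; exact hμ0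
    · intro c
      have := hEinv (rotation c)
      rwa [show ⇑(rotation c) = fun z : ℂ => (c:ℂ) * z from funext fun z => rotation_apply c z]
        at this
  have hxnorm : ‖e x‖ = 1 := by
    rw [e.norm_map]; exact mem_sphere_zero_iff_norm.1 hx
  set q : ℂ := (starRingEnd ℂ) (e x) with hqdef
  have hq : ‖-q‖ = 1 := by
    rw [norm_neg, hqdef, RCLike.norm_conj, hxnorm]
  set c0 : Circle := ⟨-q, mem_sphere_zero_iff_norm.2 hq⟩ with hc0
  set F : ℂ → ℂ := fun a => e x - (2 * (inner ℝ a (e x) : ℝ)) • a with hF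
  have mF : Measurable F := by
    have : Continuous F := by
      apply Continuous.sub continuous_const
      exact (continuous_const.mul (Continuous.inner (𝕜 := ℝ) continuous_id continuous_const)).smul
        continuous_id
    exact this.measurable
  have hsqm : Measurable (fun z : ℂ => z * z) := (continuous_id.mul continuous_id).measurable
  have part1 : μ.map (fun u => reflect u x) = μ := by
    have hcomp : (fun u : Esp 1 => reflect u x) = ⇑e.symm ∘ F ∘ ⇑e := by
      funext u
      show reflect u x = e.symm (e x - (2 * (inner ℝ (e u) (e x) : ℝ)) • (e u))
      rw [LinearIsometryEquiv.inner_map_map, ← LinearIsometryEquiv.map_smul,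
        ← LinearIsometryEquiv.map_sub, LinearIsometryEquiv.symm_apply_apply]
      rfl
    have hFg : (μ.map ⇑e).map F = μ.map ⇑e := by
      have hae : F =ᵐ[μ.map ⇑e] (fun a : ℂ => -(a * a * q)) := by
        have hmem : ∀ᵐ a ∂(μ.map ⇑e), a ∈ Metric.sphere (0:ℂ) 1 := by
          rw [ae_iff]
          exact hν.2.1
        filter_upwards [hmem] with a ha
        exact reflect_formula (mem_sphere_zero_iff_norm.1 ha)
      rw [Measure.map_congr hae]
      have hgcomp : (fun a : ℂ => -(a * a * q))
          = (fun z : ℂ => ((c0 : Circle) : ℂ) * z) ∘ (fun z : ℂ => z * z) := by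
        funext a
        show -(a * a * q) = (-q) * (a * a)
        ring
      rw [hgcomp, ← Measure.map_map (measurable_const_mul _) hsqm,
        circUnif_unique (circUnif_sq hν) hν, hν.2.2 c0]
    rw [hcomp, show ⇑e.symm ∘ F ∘ ⇑e = ⇑e.symm ∘ (F ∘ ⇑e) from rfl,
      ← Measure.map_map e.symm.continuous.measurable (mF.comp e.continuous.measurable),
      ← Measure.map_map mF e.continuous.measurable, hFg,
      Measure.map_map e.symm.continuous.measurable e.continuous.measurable]
    rw [show ⇑e.symm ∘ ⇑e = id from funext fun u => e.symm_apply_apply u, Measure.map_id]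
  refine ⟨part1, ?_⟩
  rintro β ⟨hβ0, hβπ⟩
  have hSm : MeasurableSet {z : ℂ | β < Real.arccos z.re} := by
    have : Continuous (fun z : ℂ => Real.arccos z.re) :=
      Real.continuous_arccos.comp Complex.continuous_re
    exact measurableSet_lt measurable_const this.measurable
  by_cases hcase : β < gdist x (npole 1)
  · rw [if_pos hcase]
    have hset : {u : Esp 1 | β < gdist (compress u x) (npole 1)}
        = (fun u : Esp 1 => reflect u x) ⁻¹' {y : Esp 1 | β < gdist y (npole 1)} := by
      ext u
      simp only [Set.mem_setOf_eq, Set.mem_preimage, compress]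
      split_ifs with h
      · exact ⟨fun hb => lt_of_lt_of_le hb h, fun _ => hcase⟩
      · exact Iff.rfl
    have hmr : Measurable (fun u : Esp 1 => reflect u x) := by
      have : Continuous (fun u : Esp 1 => reflect u x) := by
        apply Continuous.sub continuous_const
        exact (continuous_const.mul (Continuous.inner (𝕜 := ℝ) continuous_id continuous_const)).smul
          continuous_id
      exact this.measurable
    have hmeasset : MeasurableSet {y : Esp 1 | β < gdist y (npole 1)} := by
      have : Continuous (fun y : Esp 1 => gdist y (npole 1)) :=
        Real.continuous_arccos.comp (Continuous.inner continuous_id continuous_const)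
      exact measurableSet_lt measurable_const this.measurable
    have hpre : ⇑e ⁻¹' {z : ℂ | β < Real.arccos z.re} = {y : Esp 1 | β < gdist y (npole 1)} := by
      ext y
      simp only [Set.mem_preimage, Set.mem_setOf_eq, gdist]
      have hnp : e (npole 1) = 1 := by
        rw [he, npole]
        rw [Complex.orthonormalBasisOneI_repr_symm_apply]
        simp [EuclideanSpace.single_apply]
      have h1 : (inner ℝ y (npole 1) : ℝ) = (e y).re := by
        rw [← LinearIsometryEquiv.inner_map_map e y (npole 1), hnp, Complex.inner]
        simp
      rw [h1]
    rw [hset, ← Measure.map_apply hmr hmeasset, part1, ← hpre,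
      ← Measure.map_apply e.continuous.measurable hSm,
      circUnif_unique hν nustd_circUnif, nustd_arc hβ0 hβπ]
    rw [ENNReal.toReal_mul, ENNReal.toReal_inv, ENNReal.toReal_ofReal (by positivity),
      ENNReal.toReal_ofReal (by linarith)]
    have hπ : (π : ℝ) ≠ 0 := ne_of_gt Real.pi_pos
    field_simp
    ring
  · rw [if_neg hcase]
    have hempty : {u : Esp 1 | β < gdist (compress u x) (npole 1)} = ∅ := by
      ext u
      simp only [Set.mem_setOf_eq, Set.mem_empty_iff_false, iff_false, not_lt, compress]
      split_ifs with h
      · exact not_lt.1 hcase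
      · exact le_trans (le_of_lt (not_le.1 h)) (not_lt.1 hcase)
    rw [hempty, measure_empty]
    simp
end
end
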